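/- In the polynomial ring ℂ[x₂,x₃,x₄], let 𝒯₁ be the 3×3 matrix with rows (2x₂, 3x₃, 4x₄), (x₃, x₄, 12x₂x₃), ((2/3)x₄ − 2x₂², 3x₂x₃, 3x₃² + 2x₂x₄). Then 3·det 𝒯₁ = ĝ₂³ − 27ĝ₃², i.e. 3·det 𝒯₁ = −432x₂³x₃² + 36x₂²x₄² + 108x₂x₃²x₄ − 27x₃⁴ − 8x₄³, where ĝ₂ = 12x₂² − 2x₄ and ĝ₃ = −8x₂³ + 2x₂x₄ − x₃². -/
import Mathlib


open MvPolynomial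

noncomputable section

/-- The polynomial ring ℂ[x₂,x₃,x₄]; `X 0 = x₂`, `X 1 = x₃`, `X 2 = x₄`. -/
abbrev R3 : Type := MvPolynomial (Fin 3) ℂ

def x2 : R3 := X 0
def x3 : R3 := X 1
def x4 : R3 := X 2

/-- ĝ₂ = 12x₂² − 2x₄ -/
def g2hat : R3 := 12 * x2 ^ 2 - 2 * x4

/-- ĝ₃ = −8x₂³ + 2x₂x₄ − x₃² -/
def g3hat : R3 := -8 * x2 ^ 3 + 2 * x2 * x4 - x3 ^ 2

/-- The matrix 𝒯₁. -/
def T1 : Matrix (Fin 3) (Fin 3) R3 :=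
  !![2 * x2, 3 * x3, 4 * x4;
     x3, x4, 12 * x2 * x3;
     C (2/3 : ℂ) * x4 - 2 * x2 ^ 2, 3 * x2 * x3, 3 * x3 ^ 2 + 2 * x2 * x4]

theorem three_det_T1 :
    3 * T1.det = g2hat ^ 3 - 27 * g3hat ^ 2 ∧
    3 * T1.det =
      -432 * x2 ^ 3 * x3 ^ 2 + 36 * x2 ^ 2 * x4 ^ 2 + 108 * x2 * x3 ^ 2 * x4
        - 27 * x3 ^ 4 - 8 * x4 ^ 3 := by
  have h : (C (2/3 : ℂ) : R3) * 3 = 2 := by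
    rw [show ((3 : R3)) = (C (3 : ℂ)) from (map_ofNat C 3).symm, ← map_mul,
      show (2/3 : ℂ) * 3 = 2 by norm_num, map_ofNat]
  constructor <;>
  · rw [Matrix.det_fin_three, T1]
    simp only [Matrix.cons_val', Matrix.cons_val_zero, Matrix.cons_val_one, Matrix.head_cons,
      Matrix.empty_val', Matrix.cons_val_fin_one, Matrix.head_fin_const, Matrix.cons_val_two,
      Matrix.tail_cons, Matrix.of_apply, Matrix.cons_val_fin_one, g2hat, g3hat]
    linear_combination (36 * x2 * x4 * x3 ^ 2 - 4 * x4 ^ 3) * h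

end
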